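/- The function g(x) = arctan( x·(8 + b(x))/(π² − 4x²) ) − x is strictly decreasing on the interval (0.301, π/2), where b(x) = (8/π)(π/2 − x) + (16/π² − 8/3)(π/2 − x)² + (32/π³ − 8/(3π))(π/2 − x)³. -/

import Mathlib

open Real

private lemma quart (t : ℝ) (h0 : 0 ≤ t) (h1 : t ≤ 1.2698) :
    0 < 6.0336 - 8.2386*t + 3.31273*t^2 - 0.4886*t^3 + 0.0335*t^4 := by
  nlinarith [sq_nonneg (t - 1.2698), sq_nonneg (t-1), sq_nonneg t, mul_nonneg h0 h0,
    sq_nonneg (t-1.2), mul_nonneg (mul_nonneg h0 h0) h0, sq_nonneg (t*t - t)]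

set_option maxHeartbeats 2000000 in
theorem stmt10 :
    StrictAntiOn (fun x : ℝ =>
      Real.arctan (x * (8 + ((8 / π) * (π / 2 - x) + (16 / π ^ 2 - 8 / 3) * (π / 2 - x) ^ 2 +
        (32 / π ^ 3 - 8 / (3 * π)) * (π / 2 - x) ^ 3)) / (π ^ 2 - 4 * x ^ 2)) - x)
      (Set.Ioo 0.301 (π / 2)) := by
  have hpl : (3.141592:ℝ) < π := Real.pi_gt_d6
  have hpu : π < 3.141593 := Real.pi_lt_d6
  have hp0 : (0:ℝ) < π := by linarith
  have hp2l : (9.8696002:ℝ) < π^2 := by nlinarith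
  have hp2u : π^2 < 9.8696066 := by nlinarith
  have hp3l : (31.006257:ℝ) < π^3 := by nlinarith
  have hp3u : π^3 < 31.006287 := by nlinarith
  have hp4l : (97.409009:ℝ) < π^4 := by nlinarith
  have hp4u : π^4 < 97.409134 := by nlinarith
  have hp6u : π^6 < 961.38983 := by nlinarith
  apply strictAntiOn_of_deriv_neg (convex_Ioo _ _)
  · apply ContinuousOn.sub _ continuousOn_id
    apply Real.continuous_arctan.comp_continuousOn
    apply ContinuousOn.div (by fun_prop) (by fun_prop)
    intro x hx
    obtain ⟨hx1, hx2⟩ := hx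
    have hx1' : (0.301:ℝ) < x := hx1
    norm_num at hx1'
    nlinarith
  · rw [interior_Ioo]
    intro x hx
    obtain ⟨hx1, hx2⟩ := hx
    have hx1' : (0.301:ℝ) < x := hx1
    norm_num at hx1'
    have hxpos : (0:ℝ) < x := by linarith
    have hD : 0 < π^2 - 4*x^2 := by nlinarith
    have hDne : π^2 - 4*x^2 ≠ 0 := ne_of_gt hD
    set t : ℝ := π/2 - x with htdef
    have ht0 : 0 < t := by simp [htdef]; linarith
    have ht1 : t ≤ 1.2698 := by simp [htdef]; linarith
    -- derivative construction
    have ht : HasDerivAt (fun y : ℝ => π/2 - y) (-1) x := by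
      simpa using (hasDerivAt_id x).const_sub (π/2)
    have hb : HasDerivAt (fun y : ℝ => (8 / π) * (π / 2 - y) + (16 / π ^ 2 - 8 / 3) * (π / 2 - y) ^ 2 +
        (32 / π ^ 3 - 8 / (3 * π)) * (π / 2 - y) ^ 3)
        ((8/π) * (-1) + (16 / π ^ 2 - 8 / 3) * ((2:ℕ) * (π/2-x)^1 * (-1)) +
          (32 / π ^ 3 - 8 / (3 * π)) * ((3:ℕ) * (π/2-x)^2 * (-1))) x :=
      ((ht.const_mul (8/π)).add ((ht.pow 2).const_mul _)).add ((ht.pow 3).const_mul _)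
    have hN : HasDerivAt (fun y : ℝ => y * (8 + ((8 / π) * (π / 2 - y) + (16 / π ^ 2 - 8 / 3) * (π / 2 - y) ^ 2 +
        (32 / π ^ 3 - 8 / (3 * π)) * (π / 2 - y) ^ 3)))
        (1 * (8 + ((8 / π) * (π / 2 - x) + (16 / π ^ 2 - 8 / 3) * (π / 2 - x) ^ 2 +
          (32 / π ^ 3 - 8 / (3 * π)) * (π / 2 - x) ^ 3)) +
         x * ((8/π) * (-1) + (16 / π ^ 2 - 8 / 3) * ((2:ℕ) * (π/2-x)^1 * (-1)) +
          (32 / π ^ 3 - 8 / (3 * π)) * ((3:ℕ) * (π/2-x)^2 * (-1)))) x :=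
      (hasDerivAt_id x).mul (hb.const_add 8)
    have hDD : HasDerivAt (fun y : ℝ => π^2 - 4*y^2) (-(4 * ((2:ℕ) * x^1 * 1))) x := by
      have := ((hasDerivAt_id x).pow 2).const_mul (4:ℝ)
      exact this.const_sub (π^2)
    have hu := hN.div hDD hDne
    have hg := (hu.arctan).sub (hasDerivAt_id' (x := x))
    have hg' : HasDerivAt (fun x : ℝ =>
      Real.arctan (x * (8 + ((8 / π) * (π / 2 - x) + (16 / π ^ 2 - 8 / 3) * (π / 2 - x) ^ 2 +
        (32 / π ^ 3 - 8 / (3 * π)) * (π / 2 - x) ^ 3)) / (π ^ 2 - 4 * x ^ 2)) - x) _ x := hg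
    rw [hg'.deriv]
    simp only [Pi.div_apply]
    -- abbreviations
    set b : ℝ := (8 / π) * (π / 2 - x) + (16 / π ^ 2 - 8 / 3) * (π / 2 - x) ^ 2 +
      (32 / π ^ 3 - 8 / (3 * π)) * (π / 2 - x) ^ 3 with hbdef
    set N : ℝ := x * (8 + b) with hNdef
    set Dv : ℝ := π^2 - 4*x^2 with hDdef
    set Nd : ℝ := 1 * (8 + b) + x * ((8/π) * (-1) + (16 / π ^ 2 - 8 / 3) * ((2:ℕ) * (π/2-x)^1 * (-1)) +
          (32 / π ^ 3 - 8 / (3 * π)) * ((3:ℕ) * (π/2-x)^2 * (-1))) with hNddef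
    have hsum : 0 < 1 + (N/Dv)^2 := by positivity
    have key : Nd * Dv - N * (-(4 * ((2:ℕ) * x^1 * 1))) < Dv^2 + N^2 := by
      have hq0 : (6.0336:ℝ) ≤ 160/3 - 640/π^2 + 16/9*π^2 := by
        have h : (160:ℝ)/3 - 640/π^2 + 16/9*π^2 = (480*π^2 - 5760 + 16*π^4)/(9*π^2) := by
          field_simp; ring
        rw [h, le_div_iff₀ (by positivity)]; linarith
      have hq1 : (-8.2386:ℝ) ≤ 512/π^3 - 128/(3*π) - 32/9*π := by
        have h : (512:ℝ)/π^3 - 128/(3*π) - 32/9*π = (4608 - 384*π^2 - 32*π^4)/(9*π^3) := by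
          field_simp; ring
        rw [h, le_div_iff₀ (by positivity)]; linarith
      have hq2 : (3.31273:ℝ) ≤ 256/(3*π^2) - 16/3 := by
        have h : (256:ℝ)/(3*π^2) - 16/3 = (256 - 16*π^2)/(3*π^2) := by field_simp
        rw [h, le_div_iff₀ (by positivity)]; linarith
      have hq3 : (-0.4886:ℝ) ≤ -256/(3*π^3) + 64/(9*π) := by
        have h : (-256:ℝ)/(3*π^3) + 64/(9*π) = (-768 + 64*π^2)/(9*π^3) := by field_simp; ring
        rw [h, le_div_iff₀ (by positivity)]; linarith
      have hq4 : (0.0335:ℝ) ≤ 1024/π^6 - 512/(3*π^4) + 64/(9*π^2) := by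
        have h : (1024:ℝ)/π^6 - 512/(3*π^4) + 64/(9*π^2) = (9216 - 1536*π^2 + 64*π^4)/(9*π^6) := by
          field_simp; ring
        rw [h, le_div_iff₀ (by positivity)]; linarith
      have hfact : Dv^2 + N^2 - (Nd * Dv - N * (-(4 * ((2:ℕ) * x^1 * 1)))) =
          t^4 * ((160/3 - 640/π^2 + 16/9*π^2) + (512/π^3 - 128/(3*π) - 32/9*π)*t +
            (256/(3*π^2) - 16/3)*t^2 + (-256/(3*π^3) + 64/(9*π))*t^3 +
            (1024/π^6 - 512/(3*π^4) + 64/(9*π^2))*t^4) := by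
        simp only [hNdef, hbdef, hDdef, hNddef, htdef]
        push_cast
        field_simp
        ring
      have hQ : 0 < (160/3 - 640/π^2 + 16/9*π^2) + (512/π^3 - 128/(3*π) - 32/9*π)*t +
            (256/(3*π^2) - 16/3)*t^2 + (-256/(3*π^3) + 64/(9*π))*t^3 +
            (1024/π^6 - 512/(3*π^4) + 64/(9*π^2))*t^4 := by
        have h1 : (-8.2386:ℝ)*t ≤ (512/π^3 - 128/(3*π) - 32/9*π)*t :=
          mul_le_mul_of_nonneg_right hq1 ht0.le
        have h2 : (3.31273:ℝ)*t^2 ≤ (256/(3*π^2) - 16/3)*t^2 :=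
          mul_le_mul_of_nonneg_right hq2 (by positivity)
        have h3 : (-0.4886:ℝ)*t^3 ≤ (-256/(3*π^3) + 64/(9*π))*t^3 :=
          mul_le_mul_of_nonneg_right hq3 (by positivity)
        have h4 : (0.0335:ℝ)*t^4 ≤ (1024/π^6 - 512/(3*π^4) + 64/(9*π^2))*t^4 :=
          mul_le_mul_of_nonneg_right hq4 (by positivity)
        have := quart t ht0.le ht1
        linarith
      have hpos := mul_pos (pow_pos ht0 4) hQ
      rw [← hfact] at hpos
      linarith
    have hlt : (Nd * Dv - N * (-(4 * ((2:ℕ) * x^1 * 1)))) / Dv^2 < 1 + (N/Dv)^2 := by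
      rw [div_lt_iff₀ (by positivity)]
      have hrw : (1 + (N/Dv)^2) * Dv^2 = Dv^2 + N^2 := by
        field_simp
      rw [hrw]; exact key
    have : 1 / (1 + (N/Dv)^2) * ((Nd * Dv - N * (-(4 * ((2:ℕ) * x^1 * 1)))) / Dv^2) < 1 := by
      rw [one_div, inv_mul_lt_iff₀ hsum]
      linarith [hlt]
    linarith
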